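/- Let 𝓐 be an additive category and let C• be a (bounded or unbounded) cochain complex in 𝓐 such that the differential d^n: C^n → C^{n+1} has a kernel. Then, with τ^{≤n}C• the canonical truncation (… → C^{n-2} → C^{n-1} → ker(d^n) → 0 → …) and τ^{≥n+1}C• the canonical truncation (… → 0 → ker(d^n) → C^n → C^{n+1} → …), the sequence τ^{≤n}C• → C• → τ^{≥n+1}C• extends to a distinguished triangle τ^{≤n}C• → C• → τ^{≥n+1}C• → Σ(τ^{≤n}C•) in the homotopy category K(𝓐); in other words, C• is an extension of τ^{≥n+1}C• by τ^{≤n}C• in K(𝓐). -/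

import Mathlib

open CategoryTheory Limits ZeroObject

namespace OneSidedExact

variable {𝓐 : Type*} [Category 𝓐] [Limits.HasZeroMorphisms 𝓐]

/-- Data exhibiting a complex `T` together with a chain map `ι : T ⟶ C` as the canonical
truncation `τ^{≤n} C` of `C`, relative to a chosen kernel `i : K ⟶ C^n` of `d^n`:
`ι` is an isomorphism in degrees `< n`, `T^n ≅ K` compatibly with `i`, and `T` vanishes
in degrees `> n`. -/
structure TruncLEData (C : CochainComplex 𝓐 ℤ) (n : ℤ) {K : 𝓐} (i : K ⟶ C.X n) where
  T : CochainComplex 𝓐 ℤ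
  ι : T ⟶ C
  iso_lt : ∀ m : ℤ, m < n → IsIso (ι.f m)
  isoK : T.X n ≅ K
  compat : isoK.hom ≫ i = ι.f n
  zero_gt : ∀ m : ℤ, n < m → IsZero (T.X m)

/-- Data exhibiting a complex `T` together with a chain map `π : C ⟶ T` as the canonical
truncation `τ^{≥ n+1} C` of `C`, relative to a chosen kernel `i : K ⟶ C^n` of `d^n`:
`T` vanishes in degrees `< n - 1`, has `K` in degree `n - 1` (with differential
corresponding to `i` and with `π` corresponding in degree `n - 1` to the canonical
factorization of `d^{n-1}` through `K`), and `π` is an isomorphism in degrees `≥ n`. -/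
structure TruncGEData (C : CochainComplex 𝓐 ℤ) (n : ℤ) {K : 𝓐} (i : K ⟶ C.X n) where
  T : CochainComplex 𝓐 ℤ
  π : C ⟶ T
  zero_lt : ∀ m : ℤ, m < n - 1 → IsZero (T.X m)
  isoK : T.X (n - 1) ≅ K
  compat_d : isoK.inv ≫ T.d (n - 1) n = i ≫ π.f n
  compat_p : π.f (n - 1) ≫ isoK.hom ≫ i = C.d (n - 1) n
  iso_ge : ∀ m : ℤ, n ≤ m → IsIso (π.f m)

end OneSidedExact

set_option linter.unusedSectionVars false
namespace TruncAux

open OneSidedExact CochainComplex CochainComplex.HomComplex CochainComplex.mappingCone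
  HomologicalComplex

variable {𝓐 : Type*} [Category 𝓐] [Preadditive 𝓐] [HasZeroObject 𝓐] [HasBinaryBiproducts 𝓐]
  {C : CochainComplex 𝓐 ℤ} {n : ℤ} {K : 𝓐} {i : K ⟶ C.X n}
  (TL : TruncLEData C n i) (TG : TruncGEData C n i)

/-- the `(-1)`-cochain describing `φ : cone(ι) ⟶ τ^{≥n+1}` on the `T[1]` summand. -/
noncomputable def aCochain : Cochain TL.T TG.T (-1) :=
  Cochain.mk fun p q hpq =>
    if hp : p = n then
      (TL.T.XIsoOfEq hp).hom ≫ TL.isoK.hom ≫ TG.isoK.inv ≫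
        (TG.T.XIsoOfEq (show n - 1 = q by omega)).hom
    else 0

lemma aCochain_v_n (hpq : n + (-1) = n - 1) :
    (aCochain TL TG).v n (n - 1) hpq = TL.isoK.hom ≫ TG.isoK.inv := by
  simp [aCochain, Cochain.mk_v]

lemma aCochain_v_ne (p q : ℤ) (hpq : p + (-1) = q) (hp : p ≠ n) :
    (aCochain TL TG).v p q hpq = 0 := by
  simp [aCochain, Cochain.mk_v, hp]

/-- the `1`-cochain describing `ψ : τ^{≥n+1} ⟶ cone(ι)` on the `T[1]` summand. -/
noncomputable def alphaPsi : Cochain TG.T TL.T 1 :=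
  Cochain.mk fun p q hpq =>
    if hp : p = n - 1 then
      (TG.T.XIsoOfEq hp).hom ≫ TG.isoK.hom ≫ TL.isoK.inv ≫
        (TL.T.XIsoOfEq (show n = q by omega)).hom
    else 0

lemma alphaPsi_v_n (hpq : n - 1 + 1 = n) :
    (alphaPsi TL TG).v (n - 1) n hpq = TG.isoK.hom ≫ TL.isoK.inv := by
  simp [alphaPsi, Cochain.mk_v]

lemma alphaPsi_v_ne (p q : ℤ) (hpq : p + 1 = q) (hp : p ≠ n - 1) :
    (alphaPsi TL TG).v p q hpq = 0 := by
  simp [alphaPsi, Cochain.mk_v, hp]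

/-- the `0`-cochain describing `ψ` on the `C` summand. -/
noncomputable def betaPsi : Cochain TG.T C 0 :=
  Cochain.ofHoms fun p =>
    if hp : n ≤ p then letI := TG.iso_ge p hp; inv (TG.π.f p) else 0

lemma betaPsi_v_ge (p : ℤ) (hp : n ≤ p) :
    (betaPsi TG).v p p (add_zero p) =
      letI := TG.iso_ge p hp; inv (TG.π.f p) := by
  simp [betaPsi, hp]

lemma betaPsi_v_lt (p : ℤ) (hp : p < n) :
    (betaPsi TG).v p p (add_zero p) = 0 := by
  simp [betaPsi, not_le.mpr hp]

/-- the `0`-cochain giving the contracting homotopy in low degrees. -/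
noncomputable def sCochain : Cochain C TL.T 0 :=
  Cochain.ofHoms fun p =>
    if hp : p < n then letI := TL.iso_lt p hp; -inv (TL.ι.f p) else 0

lemma sCochain_v_lt (p : ℤ) (hp : p < n) :
    (sCochain TL).v p p (add_zero p) =
      letI := TL.iso_lt p hp; -inv (TL.ι.f p) := by
  simp [sCochain, hp]

lemma sCochain_v_ge (p : ℤ) (hp : n ≤ p) :
    (sCochain TL).v p p (add_zero p) = 0 := by
  simp [sCochain, not_lt.mpr hp]

end TruncAux

namespace TruncAux

open OneSidedExact CochainComplex CochainComplex.HomComplex CochainComplex.mappingCone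
  HomologicalComplex

variable {𝓐 : Type*} [Category 𝓐] [Preadditive 𝓐] [HasZeroObject 𝓐] [HasBinaryBiproducts 𝓐]
  {C : CochainComplex 𝓐 ℤ} {n : ℤ} {K : 𝓐} {i : K ⟶ C.X n}
  (TL : TruncLEData C n i) (TG : TruncGEData C n i)

lemma key (hm : Mono i) :
    TL.ι.f (n - 1) ≫ TG.π.f (n - 1) ≫ TG.isoK.hom = TL.T.d (n - 1) n ≫ TL.isoK.hom := by
  haveI := hm
  rw [← cancel_mono i]
  simp only [Category.assoc, TL.compat, TG.compat_p]
  exact TL.ι.comm (n - 1) n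

lemma isoKinv_ι : TL.isoK.inv ≫ TL.ι.f n = i := by
  rw [← TL.compat, Iso.inv_hom_id_assoc]

lemma d_comp_inv_π :
    TG.T.d (n - 1) n ≫ (letI := TG.iso_ge n le_rfl; inv (TG.π.f n)) = TG.isoK.hom ≫ i := by
  letI := TG.iso_ge n le_rfl
  rw [IsIso.comp_inv_eq, Category.assoc, ← TG.compat_d, Iso.hom_inv_id_assoc]

lemma inv_π_comp_d (p : ℤ) (hp : n ≤ p) :
    (letI := TG.iso_ge p hp; inv (TG.π.f p)) ≫ C.d p (p + 1) =
      TG.T.d p (p + 1) ≫ (letI := TG.iso_ge (p + 1) (by omega); inv (TG.π.f (p + 1))) := by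
  letI := TG.iso_ge p hp
  letI := TG.iso_ge (p + 1) (by omega)
  rw [IsIso.inv_comp_eq, ← Category.assoc, TG.π.comm p (p + 1), Category.assoc,
    IsIso.hom_inv_id, Category.comp_id]

lemma eq_desc (hm : Mono i) :
    δ (-1) 0 (aCochain TL TG) = Cochain.ofHom (TL.ι ≫ TG.π) := by
  ext p
  rcases lt_trichotomy p n with h | he | h
  · rcases eq_or_ne p (n - 1) with rfl | hne
    · rw [δ_v (-1) 0 (by omega) _ (n - 1) (n - 1) (add_zero _) (n - 2) n (by omega) (by omega)]
      rw [aCochain_v_ne _ _ (n - 1) (n - 2) (by omega) (by omega),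
        aCochain_v_n _ _ (by omega)]
      simp only [zero_comp, zero_add, Int.negOnePow_zero, one_smul, Cochain.ofHom_v,
        HomologicalComplex.comp_f, ← Category.assoc]
      rw [← key TL TG hm]
      simp
    · rw [δ_v (-1) 0 (by omega) _ p p (add_zero _) (p - 1) (p + 1) (by omega) rfl]
      rw [aCochain_v_ne _ _ p (p - 1) (by omega) (by omega),
        aCochain_v_ne _ _ (p + 1) p (by omega) (by omega)]
      simp only [zero_comp, comp_zero, smul_zero, add_zero, Cochain.ofHom_v,
        HomologicalComplex.comp_f]
      exact ((TG.zero_lt p (by omega)).eq_of_tgt _ _).symm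
  · obtain rfl : n = p := he.symm
    rw [δ_v (-1) 0 (by omega) _ n n (add_zero _) (n - 1) (n + 1) (by omega) rfl]
    rw [aCochain_v_n _ _ (by omega), aCochain_v_ne _ _ (n + 1) n (by omega) (by omega)]
    simp only [comp_zero, smul_zero, add_zero, Cochain.ofHom_v, HomologicalComplex.comp_f,
      Category.assoc]
    rw [TG.compat_d, ← Category.assoc, TL.compat]
  · rw [δ_v (-1) 0 (by omega) _ p p (add_zero _) (p - 1) (p + 1) (by omega) rfl]
    rw [aCochain_v_ne _ _ p (p - 1) (by omega) (by omega),
      aCochain_v_ne _ _ (p + 1) p (by omega) (by omega)]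
    simp only [zero_comp, comp_zero, smul_zero, add_zero, Cochain.ofHom_v,
      HomologicalComplex.comp_f]
    exact ((TL.zero_gt p h).eq_of_src _ _).symm

/-- The chain map `cone(ι) ⟶ τ^{≥ n+1} C`. -/
noncomputable def phiC (hm : Mono i) : mappingCone TL.ι ⟶ TG.T :=
  desc _ (aCochain TL TG) TG.π (eq_desc TL TG hm)

noncomputable def alphaPsiCocycle : Cocycle TG.T TL.T 1 :=
  Cocycle.mk (alphaPsi TL TG) 2 rfl (by
    ext p q hpq
    rcases eq_or_ne p (n - 1) with rfl | hne
    · obtain rfl : n + 1 = q := by omega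
      rw [δ_v 1 2 rfl _ (n - 1) (n + 1) hpq n n (by omega) (by omega)]
      rw [alphaPsi_v_n _ _ (by omega), alphaPsi_v_ne _ _ n (n + 1) (by omega) (by omega)]
      have hd : TL.T.d n (n + 1) = 0 := (TL.zero_gt (n + 1) (by omega)).eq_of_tgt _ _
      simp [hd]
    · rcases eq_or_ne p (n - 2) with rfl | hne'
      · obtain rfl : n = q := by omega
        rw [δ_v 1 2 rfl _ (n - 2) n hpq (n - 1) (n - 1) (by omega) (by omega)]
        rw [alphaPsi_v_ne _ _ (n - 2) (n - 1) (by omega) (by omega)]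
        have hd : TG.T.d (n - 2) (n - 1) = 0 := (TG.zero_lt (n - 2) (by omega)).eq_of_src _ _
        simp [hd]
      · rw [δ_v 1 2 rfl _ p q hpq (p + 1) (p + 1) (by omega) rfl]
        rw [alphaPsi_v_ne _ _ p (p + 1) (by omega) hne,
          alphaPsi_v_ne _ _ (p + 1) q (by omega) (by omega)]
        simp)

lemma eq_lift :
    δ 0 1 (betaPsi TG) +
      (alphaPsi TL TG).comp (Cochain.ofHom TL.ι) (add_zero 1) = 0 := by
  ext p q hpq
  rw [Cochain.add_v, Cochain.comp_zero_cochain_v]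
  rcases lt_trichotomy p (n - 1) with h | rfl | h
  · obtain rfl : q = p + 1 := by omega
    rw [δ_v 0 1 (by omega) _ p (p + 1) hpq p (p + 1) (by omega) rfl]
    rw [alphaPsi_v_ne _ _ p (p + 1) (by omega) (by omega), betaPsi_v_lt _ p (by omega),
      betaPsi_v_lt _ (p + 1) (by omega)]
    simp
  · obtain rfl : n = q := by omega
    rw [δ_v 0 1 (by omega) _ (n - 1) n hpq (n - 1) n (by omega) (by omega)]
    rw [alphaPsi_v_n _ _ (by omega), betaPsi_v_lt _ (n - 1) (by omega),
      betaPsi_v_ge _ n le_rfl]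
    simp only [zero_comp, zero_add, Int.negOnePow_one, Units.neg_smul, one_smul,
      Cochain.ofHom_v, Cochain.zero_v]
    rw [d_comp_inv_π, Category.assoc, isoKinv_ι]
    simp
  · obtain rfl : q = p + 1 := by omega
    rw [δ_v 0 1 (by omega) _ p (p + 1) hpq p (p + 1) (by omega) rfl]
    rw [alphaPsi_v_ne _ _ p (p + 1) (by omega) (by omega), betaPsi_v_ge _ p (by omega),
      betaPsi_v_ge _ (p + 1) (by omega)]
    rw [inv_π_comp_d TG p (by omega)]
    simp

lemma eq_lift' :
    δ 0 1 (betaPsi TG) +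
      (alphaPsiCocycle TL TG : Cochain TG.T TL.T 1).comp (Cochain.ofHom TL.ι) (add_zero 1) = 0 :=
  eq_lift TL TG

/-- The chain map `τ^{≥ n+1} C ⟶ cone(ι)`. -/
noncomputable def psiC : TG.T ⟶ mappingCone TL.ι :=
  lift _ (alphaPsiCocycle TL TG) (betaPsi TG) (eq_lift' TL TG)


lemma alphaPsiCocycle_coe :
    (alphaPsiCocycle TL TG : Cochain TG.T TL.T 1) = alphaPsi TL TG := rfl

lemma psi_phi (hm : Mono i) : psiC TL TG ≫ phiC TL TG hm = 𝟙 TG.T := by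
  ext p
  simp only [HomologicalComplex.comp_f, HomologicalComplex.id_f, psiC]
  rcases lt_trichotomy p (n - 1) with h | he | h
  · rw [lift_f _ _ _ _ p (p + 1) rfl]
    simp only [phiC, alphaPsiCocycle_coe, Preadditive.add_comp, Category.assoc,
      inl_v_desc_f, inr_f_desc_f]
    rw [alphaPsi_v_ne _ _ p (p + 1) rfl (by omega), betaPsi_v_lt _ p (by omega)]
    simp only [zero_comp, comp_zero, add_zero]
    exact ((TG.zero_lt p h).eq_of_src _ _)
  · obtain rfl : n - 1 = p := he.symm
    rw [lift_f _ _ _ _ (n - 1) n (by omega)]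
    simp only [phiC, alphaPsiCocycle_coe, Preadditive.add_comp, Category.assoc,
      inl_v_desc_f, inr_f_desc_f]
    rw [alphaPsi_v_n _ _ (by omega), betaPsi_v_lt _ (n - 1) (by omega),
      aCochain_v_n _ _ (by omega)]
    simp
  · rw [lift_f _ _ _ _ p (p + 1) rfl]
    simp only [phiC, alphaPsiCocycle_coe, Preadditive.add_comp, Category.assoc,
      inl_v_desc_f, inr_f_desc_f]
    rw [alphaPsi_v_ne _ _ p (p + 1) rfl (by omega), betaPsi_v_ge _ p (by omega)]
    letI := TG.iso_ge p (by omega)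
    simp

lemma inv_ι_comp_d (p : ℤ) (hp : p + 1 < n) :
    (letI := TL.iso_lt p (by omega); inv (TL.ι.f p)) ≫ TL.T.d p (p + 1) =
      C.d p (p + 1) ≫ (letI := TL.iso_lt (p + 1) hp; inv (TL.ι.f (p + 1))) := by
  letI := TL.iso_lt p (by omega)
  letI := TL.iso_lt (p + 1) hp
  rw [IsIso.inv_comp_eq, ← Category.assoc, TL.ι.comm p (p + 1), Category.assoc,
    IsIso.hom_inv_id, Category.comp_id]


lemma h1 (hm : Mono i) :
    (inl TL.ι).comp (Cochain.ofHom (phiC TL TG hm ≫ psiC TL TG)) (add_zero (-1)) =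
      δ (-2) (-1) (0 : Cochain TL.T (mappingCone TL.ι) (-2)) +
      (Cochain.ofHom TL.ι).comp ((sCochain TL).comp (inl TL.ι) (zero_add (-1)))
        (zero_add (-1)) +
      (inl TL.ι).comp (Cochain.ofHom (𝟙 (mappingCone TL.ι))) (add_zero (-1)) := by
  ext p q hpq
  simp only [δ_zero, zero_add, Cochain.add_v, Cochain.comp_zero_cochain_v,
    Cochain.zero_cochain_comp_v, HomologicalComplex.comp_f, HomologicalComplex.id_f,
    Category.comp_id, phiC, psiC, Cochain.ofHom_v]
  rw [inl_v_desc_f_assoc]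
  rcases lt_trichotomy p n with h | he | h
  · rw [aCochain_v_ne _ _ p q hpq (by omega), sCochain_v_lt _ p h]
    letI := TL.iso_lt p h
    simp
  · obtain rfl : n = p := he.symm
    obtain rfl : n - 1 = q := by omega
    rw [aCochain_v_n _ _ (by omega), sCochain_v_ge _ n le_rfl,
      lift_f _ _ _ _ (n - 1) n (by omega)]
    rw [alphaPsiCocycle_coe, alphaPsi_v_n _ _ (by omega), betaPsi_v_lt _ (n - 1) (by omega)]
    simp
  · exact (TL.zero_gt p h).eq_of_src _ _

lemma h2 (hm : Mono i) :
    Cochain.ofHom (inr TL.ι ≫ (phiC TL TG hm ≫ psiC TL TG)) =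
      δ (-1) 0 ((sCochain TL).comp (inl TL.ι) (zero_add (-1))) +
      Cochain.ofHom (inr TL.ι ≫ 𝟙 (mappingCone TL.ι)) := by
  ext p
  simp only [Cochain.add_v, Cochain.ofHom_v, HomologicalComplex.comp_f,
    HomologicalComplex.id_f, Category.comp_id, phiC, psiC, inr_f_desc_f_assoc]
  rcases lt_trichotomy p (n - 1) with h | he | h
  · rw [δ_v (-1) 0 (by omega) _ p p (add_zero p) (p - 1) (p + 1) (by omega) rfl]
    rw [Cochain.comp_v _ _ (zero_add (-1)) p p (p - 1) (add_zero p) (by omega),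
      Cochain.comp_v _ _ (zero_add (-1)) (p + 1) (p + 1) p (add_zero _) (by omega)]
    rw [lift_f _ _ _ _ p (p + 1) rfl, alphaPsiCocycle_coe,
      alphaPsi_v_ne _ _ p (p + 1) rfl (by omega), betaPsi_v_lt _ p (by omega),
      sCochain_v_lt _ p (by omega), sCochain_v_lt _ (p + 1) (by omega)]
    letI := TL.iso_lt p (by omega)
    letI := TL.iso_lt (p + 1) (by omega)
    have e := inv_ι_comp_d TL p (by omega)
    simp only [Preadditive.neg_comp, Preadditive.comp_neg, Category.assoc,
      inl_v_d TL.ι p (p - 1) (p + 1) (by omega) (by omega), Preadditive.comp_sub,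
      IsIso.hom_inv_id_assoc, Int.negOnePow_zero, one_smul, zero_comp, comp_zero,
      Preadditive.add_comp, Preadditive.sub_comp, add_zero, zero_add]
    rw [reassoc_of% e]
    simp only [neg_smul, one_smul, IsIso.inv_hom_id_assoc, Preadditive.neg_comp]
    abel
  · obtain rfl : n - 1 = p := he.symm
    rw [δ_v (-1) 0 (by omega) _ (n - 1) (n - 1) (add_zero _) (n - 2) n (by omega) (by omega)]
    rw [Cochain.comp_v _ _ (zero_add (-1)) (n - 1) (n - 1) (n - 2) (add_zero _) (by omega),
      Cochain.comp_v _ _ (zero_add (-1)) n n (n - 1) (add_zero _) (by omega)]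
    rw [lift_f _ _ _ _ (n - 1) n (by omega), alphaPsiCocycle_coe,
      alphaPsi_v_n _ _ (by omega), betaPsi_v_lt _ (n - 1) (by omega),
      sCochain_v_lt _ (n - 1) (by omega), sCochain_v_ge _ n le_rfl]
    letI := TL.iso_lt (n - 1) (by omega)
    have e0 := congrArg (fun x => x ≫ TL.isoK.inv) (key TL TG hm)
    simp only [Category.assoc, Iso.hom_inv_id, Category.comp_id] at e0
    have e : (inv (TL.ι.f (n - 1))) ≫ TL.T.d (n - 1) n =
        TG.π.f (n - 1) ≫ TG.isoK.hom ≫ TL.isoK.inv := by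
      rw [IsIso.inv_comp_eq]
      exact e0.symm
    simp only [Preadditive.neg_comp, Preadditive.comp_neg, Category.assoc,
      inl_v_d TL.ι (n - 1) (n - 2) n (by omega) (by omega), Preadditive.comp_sub,
      IsIso.hom_inv_id_assoc, Int.negOnePow_zero, one_smul, zero_comp, comp_zero,
      Preadditive.add_comp, Preadditive.sub_comp, add_zero, zero_add,
      Preadditive.comp_add]
    rw [reassoc_of% e]
    simp only [neg_smul, one_smul, IsIso.inv_hom_id_assoc, Preadditive.neg_comp]
    abel
  · rw [δ_v (-1) 0 (by omega) _ p p (add_zero p) (p - 1) (p + 1) (by omega) rfl]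
    rw [Cochain.comp_v _ _ (zero_add (-1)) p p (p - 1) (add_zero p) (by omega),
      Cochain.comp_v _ _ (zero_add (-1)) (p + 1) (p + 1) p (add_zero _) (by omega)]
    rw [lift_f _ _ _ _ p (p + 1) rfl, alphaPsiCocycle_coe,
      alphaPsi_v_ne _ _ p (p + 1) rfl (by omega), betaPsi_v_ge _ p (by omega),
      sCochain_v_ge _ p (by omega), sCochain_v_ge _ (p + 1) (by omega)]
    letI := TG.iso_ge p (by omega)
    simp

/-- The homotopy `φ ≫ ψ ∼ 𝟙`. -/
noncomputable def homotopyPhiPsi (hm : Mono i) :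
    Homotopy (phiC TL TG hm ≫ psiC TL TG) (𝟙 (mappingCone TL.ι)) :=
  descHomotopy TL.ι _ _ 0 ((sCochain TL).comp (inl TL.ι) (zero_add (-1)))
    (h1 TL TG hm) (h2 TL TG hm)

lemma inr_phiC (hm : Mono i) : inr TL.ι ≫ phiC TL TG hm = TG.π := by
  simp [phiC]

end TruncAux

open OneSidedExact Pretriangulated

/-- Let `𝓐` be an additive category and `C` a cochain complex in `𝓐`
such that the differential `d^n : C^n ⟶ C^{n+1}` has a kernel `i : K ⟶ C^n`.  Then, for
any realizations `τ^{≤n} C` and `τ^{≥ n+1} C` of the canonical truncations, the sequence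
`τ^{≤n} C ⟶ C ⟶ τ^{≥ n+1} C` extends to a distinguished triangle
`τ^{≤n} C ⟶ C ⟶ τ^{≥ n+1} C ⟶ Σ (τ^{≤n} C)` in the homotopy category `K(𝓐)`;
in other words `C` is an extension of `τ^{≥ n+1} C` by `τ^{≤n} C` in `K(𝓐)`. -/
theorem truncation_triangle {𝓐 : Type*} [Category 𝓐] [Preadditive 𝓐]
    [HasZeroObject 𝓐] [HasBinaryBiproducts 𝓐]
    (C : CochainComplex 𝓐 ℤ) (n : ℤ) {K : 𝓐} (i : K ⟶ C.X n)
    (w : i ≫ C.d n (n + 1) = 0) (hi : Nonempty (IsLimit (KernelFork.ofι i w)))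
    (TL : TruncLEData C n i) (TG : TruncGEData C n i) :
    ∃ h : (HomotopyCategory.quotient 𝓐 (ComplexShape.up ℤ)).obj TG.T ⟶
        ((HomotopyCategory.quotient 𝓐 (ComplexShape.up ℤ)).obj TL.T)⟦(1 : ℤ)⟧,
      Triangle.mk ((HomotopyCategory.quotient 𝓐 (ComplexShape.up ℤ)).map TL.ι)
          ((HomotopyCategory.quotient 𝓐 (ComplexShape.up ℤ)).map TG.π) h ∈
        distTriang (HomotopyCategory 𝓐 (ComplexShape.up ℤ)) := by
  
  have hm : Mono i := by
    have := mono_of_isLimit_fork hi.some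
    simpa using this
  set Q := HomotopyCategory.quotient 𝓐 (ComplexShape.up ℤ) with hQ
  have hQψφ : Q.map (TruncAux.psiC TL TG) ≫ Q.map (TruncAux.phiC TL TG hm) = 𝟙 _ := by
    rw [← Q.map_comp, TruncAux.psi_phi TL TG hm, Q.map_id]
  have hQφψ : Q.map (TruncAux.phiC TL TG hm) ≫ Q.map (TruncAux.psiC TL TG) = 𝟙 _ := by
    rw [← Q.map_comp, ← Q.map_id]
    exact HomotopyCategory.eq_of_homotopy _ _ (TruncAux.homotopyPhiPsi TL TG hm)
  refine ⟨Q.map (TruncAux.psiC TL TG) ≫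
      (CochainComplex.mappingCone.triangleh TL.ι).mor₃, ?_⟩
  refine Pretriangulated.isomorphic_distinguished _
    (HomotopyCategory.mappingCone_triangleh_distinguished TL.ι) _ ?_
  refine Triangle.isoMk _ _ (Iso.refl _) (Iso.refl _)
    ⟨Q.map (TruncAux.psiC TL TG), Q.map (TruncAux.phiC TL TG hm), hQψφ, hQφψ⟩
    ?_ ?_ ?_
  · exact (Category.comp_id _).trans (Category.id_comp _).symm
  · change Q.map TG.π ≫ Q.map (TruncAux.psiC TL TG) =
      𝟙 _ ≫ Q.map (CochainComplex.mappingCone.inr TL.ι)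
    rw [Category.id_comp, ← TruncAux.inr_phiC TL TG hm, Q.map_comp, Category.assoc,
      hQφψ, Category.comp_id]
  · change (Q.map (TruncAux.psiC TL TG) ≫ (CochainComplex.mappingCone.triangleh TL.ι).mor₃) ≫
      (shiftFunctor (HomotopyCategory 𝓐 (ComplexShape.up ℤ)) (1 : ℤ)).map (𝟙 (Q.obj TL.T)) = _
    exact (congrArg (fun g => (Q.map (TruncAux.psiC TL TG) ≫
      (CochainComplex.mappingCone.triangleh TL.ι).mor₃) ≫ g)
      (CategoryTheory.Functor.map_id _ _)).trans (Category.comp_id _)
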